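/- Fix an even integer κ ≥ 4 and an odd integer n ≥ 1. Let E > 0 and X₀, …, X_{n+1} satisfy: T_κ(X_q) = T_κ(X_{n−q}) for q = 0, 1, …, (n−1)/2; X_{1+q}·X_{n−q} = E for q = −1, 0, …, (n−1)/2; X_q ∈ (−1,1)∖{0} and U_{κ−1}(X_q) ≠ 0 for q = 0, 1, …, (n−1)/2; and X_{n+1} ∈ {cos(lπ/κ) : 0 ≤ l ≤ κ}∖{0}. Suppose moreover there are disjoint sets I₁, I₂ with I₁ ∪ I₂ = {0, 1, …, (n−1)/2} such that X_q·X_{n−q} > 0 and U_{κ−1}(X_q)·U_{κ−1}(X_{n−q}) < 0 for q ∈ I₁, and X_q·X_{n−q} < 0 and U_{κ−1}(X_q)·U_{κ−1}(X_{n−q}) > 0 for q ∈ I₂. Then the coefficients ω_q = 2·(−1)^{(n−1)/2−q} · (∏_{p=q}^{(n−1)/2} X_p)/(∏_{p=(n+1)/2}^{n−q} X_p) · (∏_{p=(n+1)/2}^{n−q} (1−X_p²)·U_{κ−1}(X_p))/(∏_{p=q}^{(n−1)/2} (1−X_p²)·U_{κ−1}(X_p)) are all strictly negative, and consequently E ∈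 𝚯_{(n+1)/2,κ} (dimension 2). -/

import Mathlib

open Real

/-- Chebyshev polynomial of the first kind, as a real function. -/
noncomputable def chebT (n : ℕ) (x : ℝ) : ℝ := (Polynomial.Chebyshev.T ℝ n).eval x

/-- Chebyshev polynomial of the second kind, as a real function. -/
noncomputable def chebU (n : ℕ) (x : ℝ) : ℝ := (Polynomial.Chebyshev.U ℝ n).eval x

lemma chebT_cos (n : ℕ) (θ : ℝ) : chebT n (cos θ) = cos (n * θ) := by
  have := Polynomial.Chebyshev.T_real_cos θ (n : ℤ)
  simpa [chebT] using this

lemma chebU_sin (n : ℕ) (θ : ℝ) : chebU n (cos θ) * sin θ = sin ((n + 1) * θ) := by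
  have := Polynomial.Chebyshev.U_real_cos θ (n : ℤ)
  simpa [chebU] using this

lemma lemA (j κ : ℕ) (hj : 1 ≤ j) (hκ : 1 ≤ κ) (x : ℝ) (hx : |x| < 1) :
    chebU (j * κ - 1) x = chebU (j - 1) (chebT κ x) * chebU (κ - 1) x := by
  have hx1 : -1 < x := by cases abs_lt.mp hx; linarith
  have hx2 : x < 1 := by cases abs_lt.mp hx; linarith
  set θ := arccos x with hθ
  have hcos : cos θ = x := Real.cos_arccos (by linarith) (by linarith)
  have hs : 0 < sin θ := by
    rw [hθ, Real.sin_arccos]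
    have : 0 < 1 - x ^ 2 := by nlinarith
    positivity
  have h1 : chebU (j * κ - 1) x * sin θ = sin ((j * κ : ℕ) * θ) := by
    rw [← hcos, chebU_sin, Nat.cast_sub (by simpa using Nat.mul_le_mul hj hκ : 1 ≤ j * κ)]
    ring_nf
  have h2 : chebU (κ - 1) x * sin θ = sin ((κ : ℕ) * θ) := by
    rw [← hcos, chebU_sin, Nat.cast_sub (by omega : 1 ≤ κ)]
    ring_nf
  have h3 : chebU (j - 1) (chebT κ x) * sin ((κ:ℕ) * θ) = sin ((j * κ : ℕ) * θ) := by
    rw [← hcos, chebT_cos, chebU_sin, Nat.cast_sub (by omega : 1 ≤ j)]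
    push_cast
    ring_nf
  have key : chebU (j * κ - 1) x * sin θ
      = (chebU (j - 1) (chebT κ x) * chebU (κ - 1) x) * sin θ := by
    rw [h1, ← h3, ← h2]; ring
  exact mul_right_cancel₀ (ne_of_gt hs) key

lemma lemB (j κ l : ℕ) (hj : 1 ≤ j) (hκ : 1 ≤ κ) :
    (1 - (cos (l * π / κ)) ^ 2) * chebU (j * κ - 1) (cos (l * π / κ)) = 0 := by
  set θ : ℝ := l * π / κ with hθ
  have h1 : chebU (j * κ - 1) (cos θ) * sin θ = sin ((j * l : ℕ) * π) := by
    have hκ0 : (κ : ℝ) ≠ 0 := Nat.cast_ne_zero.mpr (by omega)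
    have harg : ((j * κ - 1 : ℕ) + 1 : ℝ) * θ = ((j * l : ℕ) : ℝ) * π := by
      rw [Nat.cast_sub (by simpa using Nat.mul_le_mul hj hκ : 1 ≤ j * κ), hθ]
      push_cast
      field_simp
      ring
    rw [chebU_sin, harg]
  have h2 : sin ((j * l : ℕ) * π) = 0 := Real.sin_nat_mul_pi _
  have h3 : 1 - (cos θ)^2 = sin θ * sin θ := by
    have := Real.sin_sq_add_cos_sq θ
    nlinarith
  rw [h3]
  rw [h2] at h1
  linear_combination sin θ * h1

lemma lemC (κ : ℕ) (hκ : 1 ≤ κ) (x : ℝ) (hx : |x| < 1) (hU : chebU (κ - 1) x ≠ 0) :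
    |chebT κ x| < 1 := by
  have hx1 : -1 < x := by cases abs_lt.mp hx; linarith
  have hx2 : x < 1 := by cases abs_lt.mp hx; linarith
  set θ := arccos x with hθ
  have hcos : cos θ = x := Real.cos_arccos (by linarith) (by linarith)
  have hs : 0 < sin θ := by
    rw [hθ, Real.sin_arccos]
    have : 0 < 1 - x ^ 2 := by nlinarith
    positivity
  have h2 : chebU (κ - 1) x * sin θ = sin ((κ : ℕ) * θ) := by
    rw [← hcos, chebU_sin, Nat.cast_sub (by omega : 1 ≤ κ)]
    ring_nf
  have hsin : sin ((κ:ℕ) * θ) ≠ 0 := by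
    rw [← h2]
    exact mul_ne_zero hU (ne_of_gt hs)
  have hT : chebT κ x = cos ((κ:ℕ) * θ) := by rw [← hcos, chebT_cos]
  have hs2 : 0 < sin ((κ:ℕ)*θ) ^ 2 := by positivity
  have hpy := Real.sin_sq_add_cos_sq ((κ:ℕ) * θ)
  rw [hT, ← sq_lt_one_iff_abs_lt_one]
  nlinarith

lemma one_le_chebT_aux (y : ℝ) (hy : 1 ≤ y) :
    ∀ r : ℕ, 1 ≤ chebT r y ∧ chebT r y ≤ chebT (r + 1) y := by
  intro r
  induction r with
  | zero =>
    constructor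
    · simp [chebT, Polynomial.Chebyshev.T_zero]
    · simp [chebT, Polynomial.Chebyshev.T_zero, Polynomial.Chebyshev.T_one]; exact hy
  | succ r ih =>
    have h2 : chebT (r + 2) y = 2 * y * chebT (r + 1) y - chebT r y := by
      have h := Polynomial.Chebyshev.T_add_two ℝ (r : ℤ)
      have hc2 : ((r : ℕ) : ℤ) + 2 = ((r + 2 : ℕ) : ℤ) := by push_cast; ring
      have hc1 : ((r : ℕ) : ℤ) + 1 = ((r + 1 : ℕ) : ℤ) := by push_cast; ring
      rw [hc2, hc1] at h
      simp only [chebT, h, Polynomial.eval_sub, Polynomial.eval_mul,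
        Polynomial.eval_ofNat, Polynomial.eval_X]
    constructor
    · linarith [ih.1, ih.2]
    · rw [h2]; nlinarith [ih.1, ih.2]

lemma lemD (κ : ℕ) (hke : Even κ) (y : ℝ) (hy : 1 ≤ |y|) : 1 ≤ chebT κ y := by
  obtain ⟨r, hr⟩ := hke
  have hκ : κ = r * 2 := by omega
  have hT2 : chebT 2 y = 2 * y ^ 2 - 1 := by
    simp [chebT, Polynomial.Chebyshev.T_two]
  have hy2 : 1 ≤ chebT 2 y := by
    rw [hT2]
    have : 1 ≤ y ^ 2 := by
      rw [← sq_abs]; nlinarith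
    linarith
  have hcomp : chebT κ y = chebT r (chebT 2 y) := by
    have h := Polynomial.Chebyshev.T_mul ℝ (r : ℤ) 2
    have : ((r : ℤ) * 2) = ((κ : ℕ) : ℤ) := by rw [hκ]; push_cast; ring
    rw [this] at h
    simp [chebT, h, Polynomial.eval_comp]
  rw [hcomp]
  exact (one_le_chebT_aux _ hy2 r).1

/-- The function `g_{jκ}^E(x) = (E/x)(1-x²)U_{jκ-1}(x) + x(1-(E/x)²)U_{jκ-1}(E/x)`. -/
noncomputable def g (j κ : ℕ) (E x : ℝ) : ℝ :=
  (E / x) * (1 - x ^ 2) * chebU (j * κ - 1) x + x * (1 - (E / x) ^ 2) * chebU (j * κ - 1) (E / x)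

/-- `E ∈ 𝚯_{m,κ}` (dimension 2). -/
def Theta2 (m κ : ℕ) (E : ℝ) : Prop :=
  ∃ x : ℕ → ℝ, ∃ ω : ℕ → ℝ,
    (∀ q ≤ m, x q ≠ 0 ∧ |x q| ≤ 1 ∧ |E / x q| ≤ 1) ∧
    (∀ q < m, ω q ≤ 0) ∧
    (∀ j : ℕ, 1 ≤ j → g j κ E (x m) = ∑ q ∈ Finset.range m, ω q * g j κ E (x q))

/-- The coefficients `ω_q` of Proposition `prop1_intro` (odd case). -/
noncomputable def omegaOdd (κ n : ℕ) (X : ℕ → ℝ) (q : ℕ) : ℝ :=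
  2 * (-1 : ℝ) ^ ((n - 1) / 2 - q)
    * ((∏ p ∈ Finset.Icc q ((n - 1) / 2), X p)
        / (∏ p ∈ Finset.Icc ((n + 1) / 2) (n - q), X p))
    * ((∏ p ∈ Finset.Icc ((n + 1) / 2) (n - q), (1 - X p ^ 2) * chebU (κ - 1) (X p))
        / (∏ p ∈ Finset.Icc q ((n - 1) / 2), (1 - X p ^ 2) * chebU (κ - 1) (X p)))

lemma omegaOdd_last (κ n k : ℕ) (X : ℕ → ℝ) (hn : n = 2 * k + 1) :
    omegaOdd κ n X k = 2 * (X k / X (k + 1))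
      * (((1 - X (k + 1) ^ 2) * chebU (κ - 1) (X (k + 1)))
        / ((1 - X k ^ 2) * chebU (κ - 1) (X k))) := by
  have h1 : (n - 1) / 2 = k := by omega
  have h2 : (n + 1) / 2 = k + 1 := by omega
  have h3 : n - k = k + 1 := by omega
  rw [omegaOdd, h1, h2, h3, Finset.Icc_self, Finset.Icc_self, Finset.prod_singleton,
    Finset.prod_singleton, Finset.prod_singleton, Finset.prod_singleton]
  simp

lemma omegaOdd_rec (κ n k : ℕ) (X : ℕ → ℝ) (hn : n = 2 * k + 1) (q : ℕ) (hq : q < k)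
    (hXnq : X (n - q) ≠ 0) (hFq : (1 - X q ^ 2) * chebU (κ - 1) (X q) ≠ 0)
    (hP2 : (∏ p ∈ Finset.Icc (k + 1) (n - (q + 1)), X p) ≠ 0)
    (hQ1 : (∏ p ∈ Finset.Icc (q + 1) k, (1 - X p ^ 2) * chebU (κ - 1) (X p)) ≠ 0) :
    omegaOdd κ n X q = -(omegaOdd κ n X (q + 1))
      * ((X q * ((1 - X (n - q) ^ 2) * chebU (κ - 1) (X (n - q))))
        / (X (n - q) * ((1 - X q ^ 2) * chebU (κ - 1) (X q)))) := by
  have h1 : (n - 1) / 2 = k := by omega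
  have h2 : (n + 1) / 2 = k + 1 := by omega
  rw [omegaOdd, omegaOdd, h1, h2]
  have e1 : Finset.Icc q k = insert q (Finset.Icc (q + 1) k) := by
    ext p; simp [Finset.mem_Icc, Finset.mem_insert]; omega
  have e2 : Finset.Icc (k + 1) (n - q) = insert (n - q) (Finset.Icc (k + 1) (n - (q + 1))) := by
    ext p; simp [Finset.mem_Icc, Finset.mem_insert]; omega
  have m1 : q ∉ Finset.Icc (q + 1) k := by simp
  have m2 : n - q ∉ Finset.Icc (k + 1) (n - (q + 1)) := by simp [Finset.mem_Icc]; omega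
  have e3 : k - q = (k - (q + 1)) + 1 := by omega
  rw [e1, e2, Finset.prod_insert m1, Finset.prod_insert m1, Finset.prod_insert m2,
    Finset.prod_insert m2, e3, pow_succ]
  field_simp

set_option maxHeartbeats 1600000 in
/-- Under the "mix and match" assumption the coefficients `ω_q` are all strictly
negative, so that `E ∈ 𝚯_{(n+1)/2,κ}` (dimension 2). -/
theorem omega_negative_odd (κ n : ℕ) (hκ : 4 ≤ κ) (hke : Even κ)
    (hn : 1 ≤ n) (hno : Odd n) (E : ℝ) (hE : 0 < E) (X : ℕ → ℝ)
    (hT : ∀ q ≤ (n - 1) / 2, chebT κ (X q) = chebT κ (X (n - q)))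
    (hP : ∀ q ≤ (n + 1) / 2, X q * X (n + 1 - q) = E)
    (hX : ∀ q ≤ (n - 1) / 2, (-1 < X q ∧ X q < 1 ∧ X q ≠ 0) ∧ chebU (κ - 1) (X q) ≠ 0)
    (hlast : (∃ l : ℕ, l ≤ κ ∧ X (n + 1) = Real.cos (l * π / κ)) ∧ X (n + 1) ≠ 0)
    (I₁ I₂ : Finset ℕ) (hdisj : Disjoint I₁ I₂)
    (hunion : I₁ ∪ I₂ = Finset.range ((n + 1) / 2))
    (h₁ : ∀ q ∈ I₁, 0 < X q * X (n - q) ∧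
      chebU (κ - 1) (X q) * chebU (κ - 1) (X (n - q)) < 0)
    (h₂ : ∀ q ∈ I₂, X q * X (n - q) < 0 ∧
      0 < chebU (κ - 1) (X q) * chebU (κ - 1) (X (n - q))) :
    (∀ q < (n + 1) / 2, omegaOdd κ n X q < 0) ∧ Theta2 ((n + 1) / 2) κ E := by
  obtain ⟨k, hk⟩ := hno
  have hκ1 : 1 ≤ κ := by omega
  have hm0 : (n - 1) / 2 = k := by omega
  have hm1 : (n + 1) / 2 = k + 1 := by omega
  set ω := omegaOdd κ n X with hω
  -- basic pointwise facts
  have hXq : ∀ q ≤ k, X q ≠ 0 ∧ |X q| < 1 ∧ chebU (κ - 1) (X q) ≠ 0 := by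
    intro q hq
    obtain ⟨⟨h1, h2, h3⟩, h4⟩ := hX q (by omega)
    exact ⟨h3, abs_lt.mpr ⟨h1, h2⟩, h4⟩
  have hPq : ∀ q ≤ k, X (q + 1) * X (n - q) = E := by
    intro q hq
    have h := hP (q + 1) (by omega)
    have he : n + 1 - (q + 1) = n - q := by omega
    rwa [he] at h
  have hTq : ∀ q ≤ k, chebT κ (X q) = chebT κ (X (n - q)) := fun q hq => hT q (by omega)
  have hsign : ∀ q ≤ k,
      (X q * X (n - q)) * (chebU (κ - 1) (X q) * chebU (κ - 1) (X (n - q))) < 0 := by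
    intro q hq
    have hmem : q ∈ I₁ ∪ I₂ := by rw [hunion]; rw [Finset.mem_range]; omega
    rcases Finset.mem_union.mp hmem with h | h
    · obtain ⟨ha, hb⟩ := h₁ q h; exact mul_neg_of_pos_of_neg ha hb
    · obtain ⟨ha, hb⟩ := h₂ q h; exact mul_neg_of_neg_of_pos ha hb
  have hUnq : ∀ q ≤ k, chebU (κ - 1) (X (n - q)) ≠ 0 := by
    intro q hq h0
    have h := hsign q hq
    rw [h0] at h; simp at h
  have hXnq : ∀ q ≤ k, X (n - q) ≠ 0 := by
    intro q hq h0
    have h := hPq q hq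
    rw [h0, mul_zero] at h
    exact absurd h.symm (ne_of_gt hE)
  have habsnq : ∀ q ≤ k, |X (n - q)| < 1 := by
    intro q hq
    by_contra hcon
    push_neg at hcon
    have h1 := lemD κ hke (X (n - q)) hcon
    have h2 := lemC κ hκ1 (X q) (hXq q hq).2.1 (hXq q hq).2.2
    rw [hTq q hq] at h2
    have h3 := abs_lt.mp h2
    linarith [h3.2]
  have hnk : n - k = k + 1 := by omega
  have hhigh : ∀ p, k + 1 ≤ p → p ≤ n → X p ≠ 0 ∧ |X p| < 1 ∧ chebU (κ - 1) (X p) ≠ 0 := by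
    intro p h1 h2
    have hq : n - p ≤ k := by omega
    have hp : p = n - (n - p) := by omega
    rw [hp]
    exact ⟨hXnq _ hq, habsnq _ hq, hUnq _ hq⟩
  have hXall : ∀ p ≤ n + 1, X p ≠ 0 := by
    intro p hp
    rcases le_or_gt p k with h | h
    · exact (hXq p h).1
    · rcases Nat.lt_or_ge p (n + 1) with h2 | h2
      · exact (hhigh p h (by omega)).1
      · have he : p = n + 1 := by omega
        rw [he]; exact hlast.2
  have hFne : ∀ p ≤ n, (1 - X p ^ 2) * chebU (κ - 1) (X p) ≠ 0 := by
    intro p hp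
    rcases le_or_gt p k with h | h
    · obtain ⟨_, ha, hu⟩ := hXq p h
      have h1 := abs_lt.mp ha
      have : (1 : ℝ) - X p ^ 2 ≠ 0 := by nlinarith [h1.1, h1.2]
      exact mul_ne_zero this hu
    · obtain ⟨_, ha, hu⟩ := hhigh p h hp
      have h1 := abs_lt.mp ha
      have : (1 : ℝ) - X p ^ 2 ≠ 0 := by nlinarith [h1.1, h1.2]
      exact mul_ne_zero this hu
  have hEq : ∀ q ≤ k + 1, E / X q = X (n + 1 - q) := by
    intro q hq
    have h := hP q (by omega)
    rw [div_eq_iff (hXall q (by omega))]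
    linear_combination -h
  have hEq2 : ∀ q ≤ k, X (q + 1) = E / X (n - q) := by
    intro q hq
    rw [eq_div_iff (hXnq q hq)]
    exact hPq q hq
  have hE2 : X (k + 1) * X (k + 1) = E := by
    have h := hPq k le_rfl
    rwa [hnk] at h
  have hprodX : ∀ q ≤ k, (∏ p ∈ Finset.Icc (k + 1) (n - (q + 1)), X p) ≠ 0 := by
    intro q hq
    rw [Finset.prod_ne_zero_iff]
    intro p hp
    rw [Finset.mem_Icc] at hp
    exact hXall p (by omega)
  have hprodF : ∀ q, (∏ p ∈ Finset.Icc (q + 1) k, (1 - X p ^ 2) * chebU (κ - 1) (X p)) ≠ 0 := by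
    intro q
    rw [Finset.prod_ne_zero_iff]
    intro p hp
    rw [Finset.mem_Icc] at hp
    exact hFne p (by omega)
  have hpos : ∀ p ≤ n, 0 < 1 - X p ^ 2 := by
    intro p hp
    rcases le_or_gt p k with h | h
    · have h1 := abs_lt.mp (hXq p h).2.1; nlinarith [h1.1, h1.2]
    · have h1 := abs_lt.mp (hhigh p h hp).2.1; nlinarith [h1.1, h1.2]
  have hUall : ∀ p ≤ n, chebU (κ - 1) (X p) ≠ 0 := by
    intro p hp
    rcases le_or_gt p k with h | h
    · exact (hXq p h).2.2
    · exact (hhigh p h hp).2.2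
  -- the two key recurrences
  have R1 : ω k * (X (n + 1 - k) * ((1 - X k ^ 2) * chebU (κ - 1) (X k)))
      = 2 * X (k + 1) * ((1 - X (k + 1) ^ 2) * chebU (κ - 1) (X (k + 1))) := by
    have hexp := omegaOdd_last κ n k X hk
    rw [← hω] at hexp
    rw [hexp, ← hEq k (by omega), ← hE2]
    have hXk : X k ≠ 0 := (hXq k le_rfl).1
    have hXk1 : X (k + 1) ≠ 0 := hXall _ (by omega)
    have hUk : chebU (κ - 1) (X k) ≠ 0 := (hXq k le_rfl).2.2
    have h1k : (1 : ℝ) - X k ^ 2 ≠ 0 := ne_of_gt (hpos k (by omega))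
    field_simp
  have R2 : ∀ q < k, ω q * (X (n + 1 - q) * ((1 - X q ^ 2) * chebU (κ - 1) (X q)))
      + ω (q + 1) * (X (q + 1) * ((1 - X (n - q) ^ 2) * chebU (κ - 1) (X (n - q)))) = 0 := by
    intro q hq
    have hrec := omegaOdd_rec κ n k X hk q hq (hXnq q (le_of_lt hq)) (hFne q (by omega))
      (hprodX q (le_of_lt hq)) (hprodF q)
    rw [← hω] at hrec
    rw [hrec, ← hEq q (by omega), hEq2 q (le_of_lt hq)]
    have h1 : X q ≠ 0 := (hXq q (le_of_lt hq)).1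
    have h2 : X (n - q) ≠ 0 := hXnq q (le_of_lt hq)
    have h3 : (1 : ℝ) - X q ^ 2 ≠ 0 := ne_of_gt (hpos q (by omega))
    have h4 : chebU (κ - 1) (X q) ≠ 0 := (hXq q (le_of_lt hq)).2.2
    field_simp
    ring
  -- base case of the sign induction
  have base : ω k < 0 := by
    have hexp := omegaOdd_last κ n k X hk
    rw [← hω] at hexp
    have hsk := hsign k le_rfl
    rw [hnk] at hsk
    have hXk1 : X (k + 1) ≠ 0 := hXall (k + 1) (by omega)
    have hFk : (1 - X k ^ 2) * chebU (κ - 1) (X k) ≠ 0 := hFne k (by omega)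
    have key : ω k * (X (k + 1) * ((1 - X k ^ 2) * chebU (κ - 1) (X k))) ^ 2
        = 2 * ((X k * X (k + 1)) * (chebU (κ - 1) (X k) * chebU (κ - 1) (X (k + 1))))
          * ((1 - X k ^ 2) * (1 - X (k + 1) ^ 2)) := by
      rw [hexp]
      have hXk : X k ≠ 0 := (hXq k le_rfl).1
      have hUk : chebU (κ - 1) (X k) ≠ 0 := (hXq k le_rfl).2.2
      have h1k : (1 : ℝ) - X k ^ 2 ≠ 0 := ne_of_gt (hpos k (by omega))
      field_simp
    have hp1 : 0 < 1 - X k ^ 2 := hpos k (by omega)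
    have hp2 : 0 < 1 - X (k + 1) ^ 2 := hpos (k + 1) (by omega)
    have hkey2 : 2 * ((X k * X (k + 1)) * (chebU (κ - 1) (X k) * chebU (κ - 1) (X (k + 1))))
        * ((1 - X k ^ 2) * (1 - X (k + 1) ^ 2)) < 0 := by
      have hPP : (0 : ℝ) < (1 - X k ^ 2) * (1 - X (k + 1) ^ 2) := mul_pos hp1 hp2
      exact mul_neg_of_neg_of_pos (by linarith) hPP
    by_contra h0
    push_neg at h0
    nlinarith [key, hkey2, sq_nonneg (X (k + 1) * ((1 - X k ^ 2) * chebU (κ - 1) (X k)))]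
  -- induction step
  have step : ∀ q < k, ω (q + 1) < 0 → ω q < 0 := by
    intro q hq hq1
    have hle : q ≤ k := le_of_lt hq
    have h1 : X q ≠ 0 := (hXq q hle).1
    have h2 : X (n - q) ≠ 0 := hXnq q hle
    have haX : X (n + 1 - q) ≠ 0 := hXall _ (by omega)
    have hbX : X (q + 1) ≠ 0 := hXall _ (by omega)
    have hFq : (1 - X q ^ 2) * chebU (κ - 1) (X q) ≠ 0 := hFne q (by omega)
    have hFnq : (1 - X (n - q) ^ 2) * chebU (κ - 1) (X (n - q)) ≠ 0 := hFne (n - q) (by omega)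
    set a := X (n + 1 - q) * ((1 - X q ^ 2) * chebU (κ - 1) (X q)) with ha
    set b := X (q + 1) * ((1 - X (n - q) ^ 2) * chebU (κ - 1) (X (n - q))) with hb
    have hane : a ≠ 0 := mul_ne_zero haX hFq
    have hab : a * b * (X q * X (n - q)) ^ 2
        = E ^ 2 * ((1 - X q ^ 2) * (1 - X (n - q) ^ 2))
          * ((X q * X (n - q)) * (chebU (κ - 1) (X q) * chebU (κ - 1) (X (n - q)))) := by
      rw [ha, hb, ← hEq q (by omega), hEq2 q hle]
      have h3 : (1 : ℝ) - X q ^ 2 ≠ 0 := ne_of_gt (hpos q (by omega))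
      have h4 : chebU (κ - 1) (X q) ≠ 0 := (hXq q hle).2.2
      have h5 : (1 : ℝ) - X (n - q) ^ 2 ≠ 0 := ne_of_gt (hpos (n - q) (by omega))
      have h6 : chebU (κ - 1) (X (n - q)) ≠ 0 := hUnq q hle
      field_simp
    have habneg : a * b * (X q * X (n - q)) ^ 2 < 0 := by
      rw [hab]
      have hpp : 0 < E ^ 2 * ((1 - X q ^ 2) * (1 - X (n - q) ^ 2)) := by
        have := hpos q (by omega)
        have := hpos (n - q) (by omega)
        positivity
      exact mul_neg_of_pos_of_neg hpp (hsign q hle)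
    have hR := R2 q hq
    have h1' : ω q * a = -(ω (q + 1)) * b := by linear_combination hR
    have h2' : ω q * (a * (X q * X (n - q))) ^ 2
        = (-(ω (q + 1))) * (a * b * (X q * X (n - q)) ^ 2) := by
      linear_combination (a * (X q * X (n - q)) ^ 2) * h1'
    have hrhs : (-(ω (q + 1))) * (a * b * (X q * X (n - q)) ^ 2) < 0 :=
      mul_neg_of_pos_of_neg (by linarith) habneg
    by_contra h0
    push_neg at h0
    nlinarith [h2', hrhs, sq_nonneg (a * (X q * X (n - q)))]
  -- all ω are negative
  have hneg : ∀ d q, q + d = k → ω q < 0 := by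
    intro d
    induction d with
    | zero =>
      intro q hq
      have : q = k := by omega
      rw [this]; exact base
    | succ d ih =>
      intro q hq
      exact step q (by omega) (ih (q + 1) (by omega))
  have part1 : ∀ q ≤ k, ω q < 0 := fun q hq => hneg (k - q) q (by omega)
  constructor
  · intro q hq
    exact part1 q (by omega)
  -- Theta2
  rw [hm1]
  refine ⟨X, ω, ?_, ?_, ?_⟩
  · intro q hq
    refine ⟨hXall q (by omega), ?_, ?_⟩
    · rcases le_or_gt q k with h | h
      · exact le_of_lt (hXq q h).2.1
      · have : q = k + 1 := by omega
        rw [this]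
        have h2 := habsnq k le_rfl
        rw [hnk] at h2
        exact le_of_lt h2
    · rw [hEq q hq]
      rcases Nat.eq_zero_or_pos q with h | h
      · rw [h]
        simp only [Nat.sub_zero]
        obtain ⟨⟨l, hl, hcos⟩, _⟩ := hlast
        rw [hcos]
        exact abs_cos_le_one _
      · have hle : n + 1 - q ≤ n := by omega
        have hge : k + 1 ≤ n + 1 - q := by omega
        exact le_of_lt (hhigh _ hge hle).2.1
  · intro q hq
    exact le_of_lt (part1 q (by omega))
  · intro j hj
    have G1 : ∀ q, 1 ≤ q → q ≤ k → g j κ E (X q)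
        = X (n + 1 - q) * ((1 - X q ^ 2) * chebU (κ - 1) (X q))
            * chebU (j - 1) (chebT κ (X q))
          + X q * ((1 - X (n + 1 - q) ^ 2) * chebU (κ - 1) (X (n + 1 - q)))
            * chebU (j - 1) (chebT κ (X (q - 1))) := by
      intro q h1q hqk
      have habs : |X q| < 1 := (hXq q hqk).2.1
      have habs2 : |X (n + 1 - q)| < 1 := (hhigh _ (by omega) (by omega)).2.1
      have hTnq : chebT κ (X (n + 1 - q)) = chebT κ (X (q - 1)) := by
        have h := hTq (q - 1) (by omega)
        rw [show n - (q - 1) = n + 1 - q from by omega] at h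
        exact h.symm
      simp only [g]
      rw [hEq q (by omega), lemA j κ hj hκ1 (X q) habs,
        lemA j κ hj hκ1 (X (n + 1 - q)) habs2, hTnq]
      ring
    have G0 : g j κ E (X 0) = X (n + 1) * ((1 - X 0 ^ 2) * chebU (κ - 1) (X 0))
        * chebU (j - 1) (chebT κ (X 0)) := by
      obtain ⟨⟨l, hl, hcos⟩, -⟩ := hlast
      have habs : |X 0| < 1 := (hXq 0 (by omega)).2.1
      have hE0 : E / X 0 = X (n + 1) := by
        have h := hEq 0 (by omega)
        rwa [Nat.sub_zero] at h
      have hz : (1 - X (n + 1) ^ 2) * chebU (j * κ - 1) (X (n + 1)) = 0 := by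
        rw [hcos]; exact lemB j κ l hj hκ1
      simp only [g]
      rw [hE0, lemA j κ hj hκ1 (X 0) habs]
      linear_combination X 0 * hz
    have Gm : g j κ E (X (k + 1))
        = 2 * X (k + 1) * ((1 - X (k + 1) ^ 2) * chebU (κ - 1) (X (k + 1)))
          * chebU (j - 1) (chebT κ (X k)) := by
      have hEk1 : E / X (k + 1) = X (k + 1) := by
        have h := hEq (k + 1) le_rfl
        rwa [show n + 1 - (k + 1) = k + 1 from by omega] at h
      have habs : |X (k + 1)| < 1 := by have h := habsnq k le_rfl; rwa [hnk] at h
      have hTk1 : chebT κ (X (k + 1)) = chebT κ (X k) := by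
        have h := hTq k le_rfl; rw [hnk] at h; exact h.symm
      simp only [g]
      rw [hEk1, lemA j κ hj hκ1 (X (k + 1)) habs, hTk1]
      ring
    have hsplit : ∀ q ∈ Finset.range k, ω (q + 1) * g j κ E (X (q + 1))
        = ω (q + 1) * (X (n + 1 - (q + 1)) * ((1 - X (q + 1) ^ 2) * chebU (κ - 1) (X (q + 1))))
            * chebU (j - 1) (chebT κ (X (q + 1)))
          + ω (q + 1) * (X (q + 1) * ((1 - X (n + 1 - (q + 1)) ^ 2)
              * chebU (κ - 1) (X (n + 1 - (q + 1)))))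
            * chebU (j - 1) (chebT κ (X q)) := by
      intro q hq
      rw [Finset.mem_range] at hq
      rw [G1 (q + 1) (by omega) (by omega)]
      simp only [Nat.add_sub_cancel]
      ring
    have E1 : ∑ q ∈ Finset.range (k + 1), ω q * g j κ E (X q)
        = (∑ q ∈ Finset.range k, ω (q + 1) * g j κ E (X (q + 1))) + ω 0 * g j κ E (X 0) :=
      Finset.sum_range_succ' (fun q => ω q * g j κ E (X q)) k
    have E23 : ∑ q ∈ Finset.range k, ω (q + 1) * g j κ E (X (q + 1))
        = (∑ q ∈ Finset.range k,
            ω (q + 1) * (X (n + 1 - (q + 1)) * ((1 - X (q + 1) ^ 2) * chebU (κ - 1) (X (q + 1))))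
              * chebU (j - 1) (chebT κ (X (q + 1))))
          + ∑ q ∈ Finset.range k,
            ω (q + 1) * (X (q + 1) * ((1 - X (n + 1 - (q + 1)) ^ 2)
                * chebU (κ - 1) (X (n + 1 - (q + 1)))))
              * chebU (j - 1) (chebT κ (X q)) := by
      rw [← Finset.sum_add_distrib]
      exact Finset.sum_congr rfl hsplit
    have E4 : ∑ q ∈ Finset.range (k + 1),
          ω q * (X (n + 1 - q) * ((1 - X q ^ 2) * chebU (κ - 1) (X q)))
            * chebU (j - 1) (chebT κ (X q))
        = (∑ q ∈ Finset.range k,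
            ω (q + 1) * (X (n + 1 - (q + 1)) * ((1 - X (q + 1) ^ 2) * chebU (κ - 1) (X (q + 1))))
              * chebU (j - 1) (chebT κ (X (q + 1))))
          + ω 0 * (X (n + 1) * ((1 - X 0 ^ 2) * chebU (κ - 1) (X 0)))
            * chebU (j - 1) (chebT κ (X 0)) :=
      Finset.sum_range_succ'
        (fun q => ω q * (X (n + 1 - q) * ((1 - X q ^ 2) * chebU (κ - 1) (X q)))
          * chebU (j - 1) (chebT κ (X q))) k
    have E5 : ∑ q ∈ Finset.range (k + 1),
          ω q * (X (n + 1 - q) * ((1 - X q ^ 2) * chebU (κ - 1) (X q)))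
            * chebU (j - 1) (chebT κ (X q))
        = (∑ q ∈ Finset.range k,
            ω q * (X (n + 1 - q) * ((1 - X q ^ 2) * chebU (κ - 1) (X q)))
              * chebU (j - 1) (chebT κ (X q)))
          + ω k * (X (n + 1 - k) * ((1 - X k ^ 2) * chebU (κ - 1) (X k)))
            * chebU (j - 1) (chebT κ (X k)) :=
      Finset.sum_range_succ
        (fun q => ω q * (X (n + 1 - q) * ((1 - X q ^ 2) * chebU (κ - 1) (X q)))
          * chebU (j - 1) (chebT κ (X q))) k
    have E6 : (∑ q ∈ Finset.range k,
          ω q * (X (n + 1 - q) * ((1 - X q ^ 2) * chebU (κ - 1) (X q)))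
            * chebU (j - 1) (chebT κ (X q)))
        + ∑ q ∈ Finset.range k,
            ω (q + 1) * (X (q + 1) * ((1 - X (n + 1 - (q + 1)) ^ 2)
                * chebU (κ - 1) (X (n + 1 - (q + 1)))))
              * chebU (j - 1) (chebT κ (X q)) = 0 := by
      rw [← Finset.sum_add_distrib]
      apply Finset.sum_eq_zero
      intro q hq
      rw [Finset.mem_range] at hq
      rw [show n + 1 - (q + 1) = n - q from by omega]
      linear_combination chebU (j - 1) (chebT κ (X q)) * R2 q hq
    have W0eq : ω 0 * g j κ E (X 0)
        = ω 0 * (X (n + 1) * ((1 - X 0 ^ 2) * chebU (κ - 1) (X 0)))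
          * chebU (j - 1) (chebT κ (X 0)) := by
      rw [G0]; ring
    have Fkeq : ω k * (X (n + 1 - k) * ((1 - X k ^ 2) * chebU (κ - 1) (X k)))
          * chebU (j - 1) (chebT κ (X k))
        = 2 * X (k + 1) * ((1 - X (k + 1) ^ 2) * chebU (κ - 1) (X (k + 1)))
          * chebU (j - 1) (chebT κ (X k)) := by
      linear_combination chebU (j - 1) (chebT κ (X k)) * R1
    rw [Gm]
    linear_combination -E1 - E23 - W0eq + E4 - E5 - E6 - Fkeq
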